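/- Consider a DM two-way channel used for n channel uses with arbitrary (possibly adaptive) encoders: the time-i inputs satisfy X_{1,i} = f_{1,i}(S1^m, Y1^{i-1}) and X_{2,i} = f_{2,i}(S2^m, Y2^{i-1}) for deterministic functions f_{k,i}, and conditioned on (X_{1,i}, X_{2,i}) the output pair (Y_{1,i}, Y_{2,i}) is drawn from the per-letter law p(y1,y2|x1,x2) independently of (S1^m, S2^m) and of all past inputs and outputs. Then H(S1^m | S2^m) ≤ Σ_{i=1}^n I(X_{1,i}; Y_{2,i} | X_{2,i}) + H(S1^m | S2^m, Y2^n), and symmetrically H(S2^m | S1^m) ≤ Σ_{i=1}^n I(X_{2,i}; Y_{1,i} | X_{1,i}) + H(S2^m | S1^m, Y1^n). -/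

import Mathlib

open scoped BigOperators Classical

attribute [-instance] instDecidableEqProd
attribute [-instance] Fintype.decidablePiFintype

set_option linter.unusedSectionVars false
set_option maxHeartbeats 1000000

noncomputable section

/-- Probability that the random variable `X` equals `a`, under the pmf `μ`
on the finite sample space `Ω`. -/
def prD {Ω α : Type} [Fintype Ω] (μ : Ω → ℝ) (X : Ω → α) (a : α) : ℝ :=
  ∑ ω, if X ω = a then μ ω else 0

/-- Shannon entropy (in nats) of the random variable `X` under the pmf `μ`. -/
def ent {Ω α : Type} [Fintype Ω] [Fintype α] (μ : Ω → ℝ) (X : Ω → α) : ℝ :=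
  -∑ a, prD μ X a * Real.log (prD μ X a)

/-- Conditional entropy `H(X | Y)` under the pmf `μ`. -/
def condEnt {Ω α β : Type} [Fintype Ω] [Fintype α] [Fintype β]
    (μ : Ω → ℝ) (X : Ω → α) (Y : Ω → β) : ℝ :=
  ent μ (fun ω => (X ω, Y ω)) - ent μ Y

/-- Mutual information `I(X ; Y)` under the pmf `μ`. -/
def mutInf {Ω α β : Type} [Fintype Ω] [Fintype α] [Fintype β]
    (μ : Ω → ℝ) (X : Ω → α) (Y : Ω → β) : ℝ :=
  ent μ X + ent μ Y - ent μ (fun ω => (X ω, Y ω))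

/-- Conditional mutual information `I(X ; Y | Z)` under the pmf `μ`. -/
def condMutInf {Ω α β γ : Type} [Fintype Ω] [Fintype α] [Fintype β] [Fintype γ]
    (μ : Ω → ℝ) (X : Ω → α) (Y : Ω → β) (Z : Ω → γ) : ℝ :=
  condEnt μ X Z - condEnt μ X (fun ω => (Y ω, Z ω))

/-- `p` is a probability mass function on the finite type `α`. -/
def IsPmf {α : Type} [Fintype α] (p : α → ℝ) : Prop :=
  (∀ a, 0 ≤ p a) ∧ ∑ a, p a = 1


/-- The channel input at time `i` produced by an adaptive two-way encoder `f`,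
which maps the user's source block and the user's past channel outputs to a
channel input symbol. -/
def twInput {S X Y : Type} {m n : ℕ}
    (f : ∀ i : Fin n, (Fin m → S) → (Fin i → Y) → X)
    (sb : Fin m → S) (yb : Fin n → Y) (i : Fin n) : X :=
  f i sb (fun k => yb ⟨k.1, k.2.trans i.2⟩)

/-- Joint distribution of the source blocks and the channel output blocks of a
two-way channel driven by the adaptive encoders `f1, f2`: the sources are i.i.d. `pS`
and, at each time `i`, the output pair is drawn from the per-letter law `chan` applied
to the current inputs, independently of everything else. -/
def twMeasureAdaptive {S1 S2 X1 X2 Y1 Y2 : Type} [Fintype S1] [Fintype S2]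
    (pS : S1 × S2 → ℝ) (chan : X1 → X2 → Y1 × Y2 → ℝ) (m n : ℕ)
    (f1 : ∀ i : Fin n, (Fin m → S1) → (Fin i → Y1) → X1)
    (f2 : ∀ i : Fin n, (Fin m → S2) → (Fin i → Y2) → X2) :
    (Fin m → S1 × S2) × (Fin n → Y1 × Y2) → ℝ :=
  fun ω => (∏ i, pS (ω.1 i)) *
    ∏ j, chan (twInput f1 (fun i => (ω.1 i).1) (fun j' => (ω.2 j').1) j)
      (twInput f2 (fun i => (ω.1 i).2) (fun j' => (ω.2 j').2) j) (ω.2 j)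

section Basic
variable {Ω α β γ : Type} [Fintype Ω] (μ : Ω → ℝ)

lemma ent_eq_nml [Fintype α] (X : Ω → α) :
    ent μ X = ∑ a, Real.negMulLog (prD μ X a) := by
  rw [ent, ← Finset.sum_neg_distrib]
  exact Finset.sum_congr rfl fun a _ => by rw [Real.negMulLog]; ring

lemma prD_nonneg (hμ : ∀ ω, 0 ≤ μ ω) (X : Ω → α) (a : α) : 0 ≤ prD μ X a :=
  Finset.sum_nonneg fun ω _ => by split <;> simp [hμ ω]

lemma ite_sum_swap {c : Prop} [Decidable c] (f : Ω → ℝ) :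
    (if c then ∑ ω, f ω else 0) = ∑ ω, if c then f ω else 0 := by
  split_ifs <;> simp

lemma prD_comp_sum [Fintype α] (g : α → β) (T : Ω → α) (b : β) :
    prD μ (fun ω => g (T ω)) b = ∑ a, if g a = b then prD μ T a else 0 := by
  unfold prD
  rw [show (∑ a, if g a = b then (∑ ω, if T ω = a then μ ω else 0) else 0)
      = ∑ a, ∑ ω, if g a = b then (if T ω = a then μ ω else 0) else 0 from
    Finset.sum_congr rfl fun a _ => ite_sum_swap _]
  rw [Finset.sum_comm]
  refine Finset.sum_congr rfl fun ω _ => ?_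
  rw [show (∑ a, if g a = b then (if T ω = a then μ ω else 0) else 0)
      = ∑ a, if T ω = a then (if g a = b then μ ω else 0) else 0 from
    Finset.sum_congr rfl fun a _ => by split_ifs <;> simp_all]
  rw [Finset.sum_ite_eq Finset.univ (T ω) (fun a => if g a = b then μ ω else 0)]
  simp
lemma prD_comp_inj [Fintype α] {g : α → β} (hg : Function.Injective g) (T : Ω → α) (a : α) :
    prD μ (fun ω => g (T ω)) (g a) = prD μ T a := by
  unfold prD; exact Finset.sum_congr rfl fun ω _ => by rw [hg.eq_iff]

lemma prD_comp_of_not_range [Fintype α] (g : α → β) (T : Ω → α) {b : β}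
    (hb : ∀ a, g a ≠ b) : prD μ (fun ω => g (T ω)) b = 0 := by
  unfold prD; exact Finset.sum_eq_zero fun ω _ => by rw [if_neg (hb (T ω))]

lemma ent_comp_inj [Fintype α] [Fintype β] (g : α → β) (hg : Function.Injective g)
    (T : Ω → α) : ent μ (fun ω => g (T ω)) = ent μ T := by
  rw [ent_eq_nml, ent_eq_nml]
  have h0 : ∀ b ∈ Finset.univ, b ∉ Finset.image g Finset.univ →
      Real.negMulLog (prD μ (fun ω => g (T ω)) b) = 0 := by
    intro b _ hb
    rw [prD_comp_of_not_range μ g T (fun a hab => hb (by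
      rw [← hab]; exact Finset.mem_image_of_mem g (Finset.mem_univ a)))]
    exact Real.negMulLog_zero
  rw [← Finset.sum_subset (Finset.subset_univ _) h0,
    Finset.sum_image (fun a _ a' _ h => hg h)]
  exact Finset.sum_congr rfl fun a _ => by rw [prD_comp_inj μ hg T a]

lemma condEnt_comp_right [Fintype α] [Fintype β] [Fintype γ] (X : Ω → α) (g : β → γ)
    (hg : Function.Injective g) (V : Ω → β) :
    condEnt μ X (fun ω => g (V ω)) = condEnt μ X V := by
  unfold condEnt
  rw [ent_comp_inj μ g hg V]
  congr 1
  exact ent_comp_inj μ (fun p : α × β => (p.1, g p.2))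
    (fun p q h => by
      cases p; cases q
      simp only [Prod.mk.injEq] at h ⊢
      exact ⟨h.1, hg h.2⟩)
    (fun ω => (X ω, V ω))

lemma prD_pair_marg [Fintype α] [Fintype β] (X : Ω → α) (V : Ω → β) (v : β) :
    ∑ a, prD μ (fun ω => (X ω, V ω)) (a, v) = prD μ V v := by
  unfold prD
  rw [Finset.sum_comm]
  refine Finset.sum_congr rfl fun ω _ => ?_
  by_cases h : V ω = v <;> simp [Prod.ext_iff, h]

lemma prD_marg_mid [Fintype α] [Fintype β] [Fintype γ]
    (X : Ω → α) (Y : Ω → β) (Z : Ω → γ) (x : α) (z : γ) :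
    ∑ y, prD μ (fun ω => (X ω, Y ω, Z ω)) (x, y, z)
      = prD μ (fun ω => (X ω, Z ω)) (x, z) := by
  unfold prD
  rw [Finset.sum_comm]
  refine Finset.sum_congr rfl fun ω _ => ?_
  by_cases h : X ω = x ∧ Z ω = z
  · obtain ⟨h1, h2⟩ := h
    simp [Prod.ext_iff, h1, h2]
  · rw [if_neg (by simp [Prod.ext_iff]; tauto)]
    exact Finset.sum_eq_zero fun y _ => if_neg (by simp [Prod.ext_iff]; tauto)

lemma prD_pair_le [Fintype α] [Fintype β] (hμ : ∀ ω, 0 ≤ μ ω)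
    (X : Ω → α) (V : Ω → β) (a : α) (v : β) :
    prD μ (fun ω => (X ω, V ω)) (a, v) ≤ prD μ V v := by
  rw [← prD_pair_marg μ X V v]
  exact Finset.single_le_sum (f := fun a' => prD μ (fun ω => (X ω, V ω)) (a', v))
    (fun a' _ => prD_nonneg μ hμ _ _) (Finset.mem_univ a)

end Basic
lemma log_term_le {a b c d : ℝ} (ha : 0 ≤ a) (hab : a ≤ b) (hac : a ≤ c) (hbd : b ≤ d) :
    a * Real.log b + a * Real.log c - a * Real.log d - a * Real.log a
      ≤ b * c / d - a := by
  rcases eq_or_lt_of_le ha with h0 | h0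
  · rw [← h0]
    have hb : (0:ℝ) ≤ b := h0 ▸ hab
    have hc : (0:ℝ) ≤ c := h0 ▸ hac
    have hd : (0:ℝ) ≤ d := hb.trans hbd
    simp only [zero_mul, sub_zero, add_zero, zero_add, sub_self]
    simpa using div_nonneg (mul_nonneg hb hc) hd
  · have hb : 0 < b := lt_of_lt_of_le h0 hab
    have hc : 0 < c := lt_of_lt_of_le h0 hac
    have hd : 0 < d := lt_of_lt_of_le hb hbd
    have ht : 0 < b * c / d / a := by positivity
    have hlog : Real.log (b * c / d / a)
        = Real.log b + Real.log c - Real.log d - Real.log a := by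
      rw [Real.log_div (by positivity) (ne_of_gt h0),
        Real.log_div (by positivity) (ne_of_gt hd),
        Real.log_mul (ne_of_gt hb) (ne_of_gt hc)]
    have h1 := Real.log_le_sub_one_of_pos ht
    have h2 := mul_le_mul_of_nonneg_left h1 ha
    rw [hlog] at h2
    have h4 : a * (b * c / d / a) = b * c / d := by
      rw [mul_comm]
      exact div_mul_cancel₀ _ (ne_of_gt h0)
    calc a * Real.log b + a * Real.log c - a * Real.log d - a * Real.log a
        = a * (Real.log b + Real.log c - Real.log d - Real.log a) := by ring
      _ ≤ a * (b * c / d / a - 1) := h2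
      _ = b * c / d - a := by rw [mul_sub, mul_one, h4]

section Submod
variable {Ω α β γ : Type} [Fintype Ω] [Fintype α] [Fintype β] [Fintype γ] (μ : Ω → ℝ)

lemma ent_submodular (hμ : ∀ ω, 0 ≤ μ ω) (X : Ω → α) (Y : Ω → β) (Z : Ω → γ) :
    ent μ (fun ω => (X ω, Y ω, Z ω)) + ent μ Z
      ≤ ent μ (fun ω => (X ω, Z ω)) + ent μ (fun ω => (Y ω, Z ω)) := by
  set p3 : α × β × γ → ℝ := prD μ (fun ω => (X ω, Y ω, Z ω)) with hp3
  set pxz : α × γ → ℝ := prD μ (fun ω => (X ω, Z ω)) with hpxz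
  set pyz : β × γ → ℝ := prD μ (fun ω => (Y ω, Z ω)) with hpyz
  set pz : γ → ℝ := prD μ Z with hpz
  have h3n : ∀ x y z, 0 ≤ p3 (x, y, z) := fun x y z => prD_nonneg μ hμ _ _
  have margY : ∀ x z, ∑ y, p3 (x, y, z) = pxz (x, z) := fun x z =>
    prD_marg_mid μ X Y Z x z
  have margX : ∀ y z, ∑ x, p3 (x, y, z) = pyz (y, z) := fun y z =>
    prD_pair_marg μ X (fun ω => (Y ω, Z ω)) (y, z)
  have margZx : ∀ z, ∑ x, pxz (x, z) = pz z := fun z => prD_pair_marg μ X Z z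
  have margZy : ∀ z, ∑ y, pyz (y, z) = pz z := fun z => prD_pair_marg μ Y Z z
  have hxzn : ∀ x z, 0 ≤ pxz (x, z) := fun x z => prD_nonneg μ hμ _ _
  have hyzn : ∀ y z, 0 ≤ pyz (y, z) := fun y z => prD_nonneg μ hμ _ _
  have dom1 : ∀ x y z, p3 (x, y, z) ≤ pxz (x, z) := by
    intro x y z
    rw [← margY x z]
    exact Finset.single_le_sum (f := fun y => p3 (x, y, z))
      (fun y' _ => h3n x y' z) (Finset.mem_univ y)
  have dom2 : ∀ x y z, p3 (x, y, z) ≤ pyz (y, z) := by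
    intro x y z
    rw [← margX y z]
    exact Finset.single_le_sum (f := fun x => p3 (x, y, z))
      (fun x' _ => h3n x' y z) (Finset.mem_univ x)
  have dom3 : ∀ x z, pxz (x, z) ≤ pz z := by
    intro x z
    rw [← margZx z]
    exact Finset.single_le_sum (f := fun x => pxz (x, z))
      (fun x' _ => hxzn x' z) (Finset.mem_univ x)
  have margZ3 : ∀ z, ∑ x, ∑ y, p3 (x, y, z) = pz z := by
    intro z
    rw [← margZx z]
    exact Finset.sum_congr rfl fun x _ => margY x z
  have reorder1 : ∀ F : α → β → γ → ℝ,
      (∑ x, ∑ y, ∑ z, F x y z) = ∑ y, ∑ z, ∑ x, F x y z := by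
    intro F
    rw [Finset.sum_comm]
    exact Finset.sum_congr rfl fun y _ => Finset.sum_comm
  have reorder2 : ∀ F : α → β → γ → ℝ,
      (∑ x, ∑ y, ∑ z, F x y z) = ∑ z, ∑ x, ∑ y, F x y z := by
    intro F
    rw [show (∑ x, ∑ y, ∑ z, F x y z) = ∑ x, ∑ z, ∑ y, F x y z from
      Finset.sum_congr rfl fun x _ => Finset.sum_comm]
    exact Finset.sum_comm
  have eXYZ : ent μ (fun ω => (X ω, Y ω, Z ω))
      = ∑ x, ∑ y, ∑ z, -(p3 (x, y, z) * Real.log (p3 (x, y, z))) := by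
    rw [ent_eq_nml, Fintype.sum_prod_type]
    refine Finset.sum_congr rfl fun x _ => ?_
    rw [Fintype.sum_prod_type]
    exact Finset.sum_congr rfl fun y _ => Finset.sum_congr rfl fun z _ => by
      rw [Real.negMulLog]; ring
  have eXZ : ent μ (fun ω => (X ω, Z ω))
      = ∑ x, ∑ y, ∑ z, -(p3 (x, y, z) * Real.log (pxz (x, z))) := by
    rw [ent_eq_nml, Fintype.sum_prod_type]
    refine Finset.sum_congr rfl fun x _ => ?_
    rw [Finset.sum_comm]
    refine Finset.sum_congr rfl fun z _ => ?_
    rw [Real.negMulLog, neg_mul,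
      show pxz (x, z) * Real.log (pxz (x, z))
          = (∑ y, p3 (x, y, z)) * Real.log (pxz (x, z)) from by rw [margY],
      Finset.sum_mul, ← Finset.sum_neg_distrib]
  have eYZ : ent μ (fun ω => (Y ω, Z ω))
      = ∑ x, ∑ y, ∑ z, -(p3 (x, y, z) * Real.log (pyz (y, z))) := by
    rw [ent_eq_nml, Fintype.sum_prod_type, reorder1]
    refine Finset.sum_congr rfl fun y _ => Finset.sum_congr rfl fun z _ => ?_
    rw [Real.negMulLog, neg_mul,
      show pyz (y, z) * Real.log (pyz (y, z))
          = (∑ x, p3 (x, y, z)) * Real.log (pyz (y, z)) from by rw [margX],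
      Finset.sum_mul, ← Finset.sum_neg_distrib]
  have eZ : ent μ Z
      = ∑ x, ∑ y, ∑ z, -(p3 (x, y, z) * Real.log (pz z)) := by
    rw [ent_eq_nml, reorder2]
    refine Finset.sum_congr rfl fun z _ => ?_
    rw [Real.negMulLog, neg_mul,
      show pz z * Real.log (pz z)
          = (∑ x, ∑ y, p3 (x, y, z)) * Real.log (pz z) from by rw [margZ3],
      Finset.sum_mul, ← Finset.sum_neg_distrib]
    refine Finset.sum_congr rfl fun x _ => ?_
    rw [Finset.sum_mul, ← Finset.sum_neg_distrib]
  set q : α → β → γ → ℝ := fun x y z => pxz (x, z) * pyz (y, z) / pz z with hq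
  have hsum : (ent μ (fun ω => (X ω, Z ω)) + ent μ (fun ω => (Y ω, Z ω)))
      - (ent μ (fun ω => (X ω, Y ω, Z ω)) + ent μ Z)
      = ∑ x, ∑ y, ∑ z,
        (-(p3 (x, y, z) * Real.log (pxz (x, z))) + -(p3 (x, y, z) * Real.log (pyz (y, z)))
          - (-(p3 (x, y, z) * Real.log (p3 (x, y, z))) + -(p3 (x, y, z) * Real.log (pz z)))) := by
    rw [eXYZ, eXZ, eYZ, eZ]
    simp only [← Finset.sum_add_distrib, ← Finset.sum_sub_distrib]
  have termb : ∀ x y z,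
      p3 (x, y, z) - q x y z
        ≤ -(p3 (x, y, z) * Real.log (pxz (x, z))) + -(p3 (x, y, z) * Real.log (pyz (y, z)))
          - (-(p3 (x, y, z) * Real.log (p3 (x, y, z))) + -(p3 (x, y, z) * Real.log (pz z))) := by
    intro x y z
    have h := log_term_le (h3n x y z) (dom1 x y z) (dom2 x y z) (dom3 x z)
    simp only [hq]
    linarith [h]
  have hq_total : (∑ x, ∑ y, ∑ z, q x y z) ≤ ∑ x, ∑ y, ∑ z, p3 (x, y, z) := by
    calc (∑ x, ∑ y, ∑ z, q x y z) = ∑ z, ∑ x, ∑ y, q x y z := reorder2 _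
      _ ≤ ∑ z, pz z := by
          refine Finset.sum_le_sum fun z _ => ?_
          have e1 : (∑ x, ∑ y, q x y z) = pz z * pz z / pz z := by
            simp only [hq]
            rw [show (∑ x, ∑ y, pxz (x, z) * pyz (y, z) / pz z)
                = ∑ x, pxz (x, z) * pz z / pz z from
              Finset.sum_congr rfl fun x _ => by
                rw [← Finset.sum_div, ← Finset.mul_sum, margZy]]
            rw [← Finset.sum_div, ← Finset.sum_mul, margZx]
          rw [e1]
          by_cases hz : pz z = 0
          · simp [hz]
          · rw [mul_div_assoc, div_self hz, mul_one]
      _ = ∑ z, ∑ x, ∑ y, p3 (x, y, z) := (Finset.sum_congr rfl fun z _ => margZ3 z).symm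
      _ = ∑ x, ∑ y, ∑ z, p3 (x, y, z) := (reorder2 _).symm
  have hstep : (∑ x, ∑ y, ∑ z, (p3 (x, y, z) - q x y z))
      ≤ ∑ x, ∑ y, ∑ z,
        (-(p3 (x, y, z) * Real.log (pxz (x, z))) + -(p3 (x, y, z) * Real.log (pyz (y, z)))
          - (-(p3 (x, y, z) * Real.log (p3 (x, y, z))) + -(p3 (x, y, z) * Real.log (pz z)))) :=
    Finset.sum_le_sum fun x _ => Finset.sum_le_sum fun y _ =>
      Finset.sum_le_sum fun z _ => termb x y z
  have hsplit : (∑ x, ∑ y, ∑ z, (p3 (x, y, z) - q x y z))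
      = (∑ x, ∑ y, ∑ z, p3 (x, y, z)) - (∑ x, ∑ y, ∑ z, q x y z) := by
    simp only [Finset.sum_sub_distrib]
  linarith [hsum, hstep, hq_total, hsplit]

end Submod

section CondIneq
variable {Ω α β γ : Type} [Fintype Ω] [Fintype α] [Fintype β] [Fintype γ] (μ : Ω → ℝ)

lemma condEnt_pair_le (hμ : ∀ ω, 0 ≤ μ ω) (X : Ω → α) (Y : Ω → β) (Z : Ω → γ) :
    condEnt μ X (fun ω => (Y ω, Z ω)) ≤ condEnt μ X Z := by
  have h := ent_submodular μ hμ X Y Z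
  have e1 : condEnt μ X (fun ω => (Y ω, Z ω))
      = ent μ (fun ω => (X ω, Y ω, Z ω)) - ent μ (fun ω => (Y ω, Z ω)) := rfl
  have e2 : condEnt μ X Z = ent μ (fun ω => (X ω, Z ω)) - ent μ Z := rfl
  rw [e1, e2]; linarith

lemma condEnt_le_of_comp (hμ : ∀ ω, 0 ≤ μ ω) (X : Ω → α) (V : Ω → β) (W : Ω → γ)
    (g : β → γ) (hW : ∀ ω, W ω = g (V ω)) : condEnt μ X V ≤ condEnt μ X W := by
  have hinj : Function.Injective (fun v : β => (v, g v)) :=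
    fun a b h => congrArg Prod.fst h
  have h1 : condEnt μ X V = condEnt μ X (fun ω => (V ω, W ω)) := by
    have hrw : (fun ω => (V ω, W ω)) = fun ω => ((fun v => (v, g v)) (V ω)) := by
      funext ω; rw [hW ω]
    rw [hrw]
    exact (condEnt_comp_right μ X _ hinj V).symm
  rw [h1]
  exact condEnt_pair_le μ hμ X V W

lemma condMutInf_comm (X : Ω → α) (Y : Ω → β) (Z : Ω → γ) :
    condMutInf μ X Y Z = condMutInf μ Y X Z := by
  have e1 : condMutInf μ X Y Z = ent μ (fun ω => (X ω, Z ω)) - ent μ Z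
      - (ent μ (fun ω => (X ω, Y ω, Z ω)) - ent μ (fun ω => (Y ω, Z ω))) := rfl
  have e2 : condMutInf μ Y X Z = ent μ (fun ω => (Y ω, Z ω)) - ent μ Z
      - (ent μ (fun ω => (Y ω, X ω, Z ω)) - ent μ (fun ω => (X ω, Z ω))) := rfl
  have e3 : ent μ (fun ω => (Y ω, X ω, Z ω)) = ent μ (fun ω => (X ω, Y ω, Z ω)) :=
    ent_comp_inj μ (fun t : α × β × γ => (t.2.1, t.1, t.2.2))
      (fun p q h => by
        obtain ⟨p1, p2, p3⟩ := p; obtain ⟨q1, q2, q3⟩ := q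
        simp only [Prod.mk.injEq] at h ⊢; tauto) (fun ω => (X ω, Y ω, Z ω))
  rw [e1, e2, e3]; ring

end CondIneq

section Markov
variable {Ω α w zt : Type} [Fintype Ω] [Fintype α] [Fintype w] [Fintype zt] (μ : Ω → ℝ)

lemma ent_pair_kernel (X : Ω → α) (V : Ω → w)
    (g : w → zt) (K : zt → α → ℝ) (hK1 : ∀ t, ∑ a, K t a = 1)
    (hfact : ∀ a v, prD μ (fun ω => (X ω, V ω)) (a, v) = prD μ V v * K (g v) a) :
    ent μ (fun ω => (X ω, V ω))
      = ent μ V + ∑ v, prD μ V v * (∑ a, Real.negMulLog (K (g v) a)) := by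
  rw [ent_eq_nml, Fintype.sum_prod_type, Finset.sum_comm, ent_eq_nml,
    ← Finset.sum_add_distrib]
  refine Finset.sum_congr rfl fun v _ => ?_
  rw [show (∑ a, Real.negMulLog (prD μ (fun ω => (X ω, V ω)) (a, v)))
      = ∑ a, (K (g v) a * Real.negMulLog (prD μ V v)
        + prD μ V v * Real.negMulLog (K (g v) a)) from
    Finset.sum_congr rfl fun a _ => by rw [hfact a v, Real.negMulLog_mul]]
  rw [Finset.sum_add_distrib, ← Finset.sum_mul, hK1, one_mul, ← Finset.mul_sum]

lemma condEnt_markov (X : Ω → α) (V : Ω → w) (g : w → zt) (K : zt → α → ℝ)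
    (hK1 : ∀ t, ∑ a, K t a = 1)
    (hfact : ∀ a v, prD μ (fun ω => (X ω, V ω)) (a, v) = prD μ V v * K (g v) a) :
    condEnt μ X V = condEnt μ X (fun ω => g (V ω)) := by
  have hZfact : ∀ a t, prD μ (fun ω => (X ω, g (V ω))) (a, t)
      = prD μ (fun ω => g (V ω)) t * K t a := by
    intro a t
    have h1 : prD μ (fun ω => (X ω, g (V ω))) (a, t)
        = ∑ p : α × w, if (p.1, g p.2) = (a, t)
            then prD μ (fun ω => (X ω, V ω)) p else 0 :=
      prD_comp_sum μ (fun p : α × w => (p.1, g p.2)) (fun ω => (X ω, V ω)) (a, t)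
    rw [h1, Fintype.sum_prod_type, Finset.sum_comm]
    have h2 : ∀ v : w, (∑ a' : α, if ((a', g v) : α × zt) = (a, t)
        then prD μ (fun ω => (X ω, V ω)) (a', v) else 0)
        = if g v = t then prD μ V v * K t a else 0 := by
      intro v
      by_cases hgv : g v = t
      · simp only [Prod.mk.injEq, hgv, and_true, if_true]
        rw [Finset.sum_ite_eq' Finset.univ a
          (fun a' => prD μ (fun ω => (X ω, V ω)) (a', v))]
        simp [hfact a v, hgv]
      · simp [Prod.mk.injEq, hgv]
    rw [Finset.sum_congr rfl fun v _ => h2 v]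
    rw [prD_comp_sum μ g V t, Finset.sum_mul]
    exact Finset.sum_congr rfl fun v _ => by split_ifs <;> simp
  have e1 := ent_pair_kernel μ X V g K hK1 hfact
  have e2 := ent_pair_kernel μ X (fun ω => g (V ω)) id K hK1 hZfact
  have key : (∑ v, prD μ V v * (∑ a, Real.negMulLog (K (g v) a)))
      = ∑ t, prD μ (fun ω => g (V ω)) t * (∑ a, Real.negMulLog (K t a)) := by
    rw [show (∑ v, prD μ V v * (∑ a, Real.negMulLog (K (g v) a)))
        = ∑ v, ∑ t, (if g v = t then prD μ V v * (∑ a, Real.negMulLog (K t a)) else 0) from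
      Finset.sum_congr rfl fun v _ => by
        rw [Finset.sum_ite_eq Finset.univ (g v)
          (fun t => prD μ V v * (∑ a, Real.negMulLog (K t a)))]
        simp]
    rw [Finset.sum_comm]
    refine Finset.sum_congr rfl fun t _ => ?_
    rw [prD_comp_sum μ g V t, Finset.sum_mul]
    exact Finset.sum_congr rfl fun v _ => by split_ifs <;> simp
  unfold condEnt
  rw [e1, e2, key]
  simp

end Markov

section MargM
variable {P : Type} [Fintype P]

lemma markov_marg (t : ℕ) :
    ∀ (n : ℕ) (ht : t ≤ n)
      (c : ∀ j : Fin n, (Fin j → P) → P → ℝ)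
      (_ : ∀ (j : Fin n) (u : Fin j → P), ∑ p, c j u p = 1)
      (F : (Fin t → P) → ℝ),
    (∑ y : Fin n → P, F (fun k => y ⟨k.1, lt_of_lt_of_le k.2 ht⟩)
        * ∏ j, c j (fun k => y ⟨k.1, k.2.trans j.2⟩) (y j))
      = ∑ u : Fin t → P, F u
        * ∏ j : Fin t, c ⟨j.1, lt_of_lt_of_le j.2 ht⟩
            (fun k => u ⟨k.1, k.2.trans j.2⟩) (u j) := by
  refine Nat.le_induction ?_ ?_
  · intro c hc F
    rfl
  · intro n hn IH c hc F
    have key : (∑ y : Fin (n+1) → P,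
          F (fun k => y ⟨k.1, lt_of_lt_of_le k.2 (hn.trans (Nat.le_succ n))⟩)
          * ∏ j, c j (fun k => y ⟨k.1, k.2.trans j.2⟩) (y j))
        = ∑ p : P × (Fin n → P),
          F (fun k => Fin.snoc (α := fun _ => P) p.2 p.1 (⟨k.1, lt_of_lt_of_le k.2 (hn.trans (Nat.le_succ n))⟩ : Fin (n+1)))
          * ∏ j, c j (fun k => Fin.snoc (α := fun _ => P) p.2 p.1 (⟨k.1, k.2.trans j.2⟩ : Fin (n+1))) (Fin.snoc (α := fun _ => P) p.2 p.1 j) := by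
      rw [← Equiv.sum_comp (Fin.snocEquiv (fun _ => P))]
      rfl
    rw [key, Fintype.sum_prod_type, Finset.sum_comm]
    have inner : ∀ v : Fin n → P,
        (∑ a : P, F (fun k => Fin.snoc (α := fun _ => P) v a (⟨k.1, lt_of_lt_of_le k.2 (hn.trans (Nat.le_succ n))⟩ : Fin (n+1)))
          * ∏ j, c j (fun k => Fin.snoc (α := fun _ => P) v a (⟨k.1, k.2.trans j.2⟩ : Fin (n+1))) (Fin.snoc (α := fun _ => P) v a j))
        = F (fun k => v ⟨k.1, lt_of_lt_of_le k.2 hn⟩)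
          * ∏ j : Fin n, c j.castSucc (fun k => v ⟨k.1, k.2.trans j.2⟩) (v j) := by
      intro v
      have hF : ∀ a : P, (fun k : Fin t => Fin.snoc (α := fun _ => P) v a
            (⟨k.1, lt_of_lt_of_le k.2 (hn.trans (Nat.le_succ n))⟩ : Fin (n+1)))
          = fun k => v ⟨k.1, lt_of_lt_of_le k.2 hn⟩ := by
        intro a; funext k
        exact Fin.snoc_castSucc (α := fun _ => P) (p := v) (x := a) (i := ⟨k.1, lt_of_lt_of_le k.2 hn⟩)
      have hprod : ∀ a : P,
          (∏ j, c j (fun k => Fin.snoc (α := fun _ => P) v a (⟨k.1, k.2.trans j.2⟩ : Fin (n+1))) (Fin.snoc (α := fun _ => P) v a j))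
          = (∏ j : Fin n, c j.castSucc (fun k => v ⟨k.1, k.2.trans j.2⟩) (v j))
            * c (Fin.last n) (fun k => v k) a := by
        intro a
        rw [Fin.prod_univ_castSucc]
        congr 1
        · refine Finset.prod_congr rfl fun j _ => ?_
          have h1 : (fun k : Fin (j.castSucc : ℕ) => Fin.snoc (α := fun _ => P) v a
                (⟨k.1, k.2.trans (j.castSucc).2⟩ : Fin (n+1)))
              = fun k => v ⟨k.1, k.2.trans j.2⟩ := by
            funext k
            exact Fin.snoc_castSucc (α := fun _ => P) (p := v) (x := a) (i := ⟨k.1, k.2.trans j.2⟩)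
          rw [Fin.snoc_castSucc]
          exact congrFun (congrArg _ h1) (v j)
        · have h2 : (fun k : Fin ((Fin.last n : Fin (n+1)) : ℕ) => Fin.snoc (α := fun _ => P) v a
              (⟨k.1, k.2.trans (Fin.last n).2⟩ : Fin (n+1))) = fun k : Fin n => v k := by
            funext k
            exact Fin.snoc_castSucc (α := fun _ => P) (p := v) (x := a) (i := k)
          rw [Fin.snoc_last]
          exact congrFun (congrArg _ h2) a
      calc (∑ a : P, F (fun k => Fin.snoc (α := fun _ => P) v a
              (⟨k.1, lt_of_lt_of_le k.2 (hn.trans (Nat.le_succ n))⟩ : Fin (n+1)))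
            * ∏ j, c j (fun k => Fin.snoc (α := fun _ => P) v a (⟨k.1, k.2.trans j.2⟩ : Fin (n+1))) (Fin.snoc (α := fun _ => P) v a j))
          = ∑ a : P, F (fun k => v ⟨k.1, lt_of_lt_of_le k.2 hn⟩)
            * ((∏ j : Fin n, c j.castSucc (fun k => v ⟨k.1, k.2.trans j.2⟩) (v j))
              * c (Fin.last n) (fun k => v k) a) := by
            exact Finset.sum_congr rfl fun a _ => by rw [hF a, hprod a]
        _ = F (fun k => v ⟨k.1, lt_of_lt_of_le k.2 hn⟩)
            * ∏ j : Fin n, c j.castSucc (fun k => v ⟨k.1, k.2.trans j.2⟩) (v j) := by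
            rw [← Finset.mul_sum]
            rw [show (∑ a : P, (∏ j : Fin n, c j.castSucc (fun k => v ⟨k.1, k.2.trans j.2⟩) (v j))
                * c (Fin.last n) (fun k => v k) a)
              = (∏ j : Fin n, c j.castSucc (fun k => v ⟨k.1, k.2.trans j.2⟩) (v j))
                * ∑ a : P, c (Fin.last n) (fun k => v k) a from by rw [Finset.mul_sum]]
            rw [hc (Fin.last n) (fun k => v k), mul_one]
    rw [Finset.sum_congr rfl fun v _ => inner v]
    exact IH (fun j => c j.castSucc) (fun j u => hc j.castSucc u) F

end MargM

section Chan
variable {S1 S2 X1 X2 Y1 Y2 : Type}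
    [Fintype S1] [Fintype S2] [Fintype X1] [Fintype X2] [Fintype Y1] [Fintype Y2]
    (pS : S1 × S2 → ℝ) (chan : X1 → X2 → Y1 × Y2 → ℝ) {m n : ℕ}
    (f1 : ∀ i : Fin n, (Fin m → S1) → (Fin i → Y1) → X1)
    (f2 : ∀ i : Fin n, (Fin m → S2) → (Fin i → Y2) → X2)

/-- The one-step output kernel for user 2's channel output. -/
def K2 (z : X1 × X2) (b : Y2) : ℝ :=
  ∑ a : Y1 × Y2, if a.2 = b then chan z.1 z.2 a else 0

/-- The pair of channel inputs at time i as a function of sources and past outputs. -/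
def gIn (i : Fin n) (sv : (Fin m → S1 × S2) × (Fin ↑i → Y1 × Y2)) : X1 × X2 :=
  (f1 i (fun k => (sv.1 k).1) (fun k => (sv.2 k).1),
   f2 i (fun k => (sv.1 k).2) (fun k => (sv.2 k).2))

/-- The marginal weight of (sources, outputs up to time i). -/
def Qw (i : Fin n) (sv : (Fin m → S1 × S2) × (Fin ↑i → Y1 × Y2)) : ℝ :=
  (∏ k, pS (sv.1 k)) *
    ∏ j : Fin ↑i,
      chan (f1 ⟨j.1, j.2.trans i.2⟩ (fun k => (sv.1 k).1)
              (fun k => (sv.2 ⟨k.1, k.2.trans j.2⟩).1))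
           (f2 ⟨j.1, j.2.trans i.2⟩ (fun k => (sv.1 k).2)
              (fun k => (sv.2 ⟨k.1, k.2.trans j.2⟩).2))
           (sv.2 j)

lemma K2_nonneg (hchan : ∀ x1 x2, IsPmf (chan x1 x2)) (z : X1 × X2) (b : Y2) :
    0 ≤ K2 chan z b :=
  Finset.sum_nonneg fun a _ => by split <;> simp [(hchan z.1 z.2).1 a]

lemma K2_rows (hchan : ∀ x1 x2, IsPmf (chan x1 x2)) (z : X1 × X2) :
    ∑ b, K2 chan z b = 1 := by
  unfold K2
  rw [Finset.sum_comm]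
  rw [show (∑ a : Y1 × Y2, ∑ b : Y2, if a.2 = b then chan z.1 z.2 a else 0)
      = ∑ a : Y1 × Y2, chan z.1 z.2 a from
    Finset.sum_congr rfl fun a _ => by
      rw [Finset.sum_ite_eq Finset.univ a.2 (fun _ => chan z.1 z.2 a)]; simp]
  exact (hchan z.1 z.2).2

lemma twM_nonneg (hpS : IsPmf pS) (hchan : ∀ x1 x2, IsPmf (chan x1 x2)) (m' : ℕ)
    (f1' : ∀ i : Fin n, (Fin m' → S1) → (Fin i → Y1) → X1)
    (f2' : ∀ i : Fin n, (Fin m' → S2) → (Fin i → Y2) → X2) :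
    ∀ ω, 0 ≤ twMeasureAdaptive pS chan m' n f1' f2' ω := fun ω =>
  mul_nonneg (Finset.prod_nonneg fun k _ => hpS.1 _)
    (Finset.prod_nonneg fun j _ => (hchan _ _).1 _)

lemma struct_fact (hpS : IsPmf pS) (hchan : ∀ x1 x2, IsPmf (chan x1 x2))
    (i : Fin n) (b : Y2) (sv : (Fin m → S1 × S2) × (Fin ↑i → Y1 × Y2)) :
    prD (twMeasureAdaptive pS chan m n f1 f2)
      (fun ω => ((ω.2 i).2, (ω.1, fun j : Fin ↑i => ω.2 ⟨j.1, j.2.trans i.2⟩)))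
      (b, sv)
    = Qw pS chan f1 f2 i sv * K2 chan (gIn f1 f2 i sv) b := by
  obtain ⟨s, u⟩ := sv
  set μ := twMeasureAdaptive pS chan m n f1 f2 with hμdef
  -- the per-time-step kernels given the source block s
  set c : ∀ j : Fin n, (Fin ↑j → (Y1 × Y2)) → (Y1 × Y2) → ℝ := fun j v p =>
    chan (f1 j (fun k => (s k).1) (fun k => (v k).1))
         (f2 j (fun k => (s k).2) (fun k => (v k).2)) p with hc
  have hcrow : ∀ (j : Fin n) (v : Fin ↑j → (Y1 × Y2)), ∑ p, c j v p = 1 :=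
    fun j v => (hchan _ _).2
  unfold prD
  rw [Fintype.sum_prod_type]
  have hcoll : ∀ σ : Fin m → S1 × S2,
      (∑ y : Fin n → (Y1 × Y2),
        if (((σ, y).2 i).2, ((σ, y).1, fun j : Fin ↑i => (σ, y).2 ⟨j.1, j.2.trans i.2⟩))
            = ((b, (s, u)) : Y2 × ((Fin m → S1 × S2) × (Fin ↑i → (Y1 × Y2))))
          then μ (σ, y) else 0)
      = if σ = s then
          (∑ y : Fin n → (Y1 × Y2),
            if ((y i).2 = b ∧ (fun j : Fin ↑i => y ⟨j.1, j.2.trans i.2⟩) = u)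
              then μ (σ, y) else 0)
        else 0 := by
    intro σ
    rw [ite_sum_swap]
    refine Finset.sum_congr rfl fun y _ => ?_
    have hiff : ((((σ, y).2 i).2, ((σ, y).1, fun j : Fin ↑i => (σ, y).2 ⟨j.1, j.2.trans i.2⟩))
            = ((b, (s, u)) : Y2 × ((Fin m → S1 × S2) × (Fin ↑i → (Y1 × Y2)))))
        ↔ (σ = s ∧ ((y i).2 = b ∧ (fun j : Fin ↑i => y ⟨j.1, j.2.trans i.2⟩) = u)) := by
      simp only [Prod.mk.injEq]
      tauto
    rw [if_congr hiff rfl rfl, ite_and]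
  rw [Finset.sum_congr rfl fun σ _ => hcoll σ,
    Finset.sum_ite_eq' Finset.univ s
      (fun σ => ∑ y : Fin n → (Y1 × Y2),
        if ((y i).2 = b ∧ (fun j : Fin ↑i => y ⟨j.1, j.2.trans i.2⟩) = u)
          then μ (σ, y) else 0)]
  simp only [Finset.mem_univ, if_true]
  -- factor out the source probability
  have hsplit : ∀ y : Fin n → (Y1 × Y2),
      (if ((y i).2 = b ∧ (fun j : Fin ↑i => y ⟨j.1, j.2.trans i.2⟩) = u)
        then μ (s, y) else 0)
      = (∏ k, pS (s k)) *
        (if ((y i).2 = b ∧ (fun j : Fin ↑i => y ⟨j.1, j.2.trans i.2⟩) = u)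
          then (∏ j, c j (fun k => y ⟨k.1, k.2.trans j.2⟩) (y j)) else 0) := by
    intro y
    rw [mul_ite, mul_zero]
    rfl
  rw [Finset.sum_congr rfl fun y _ => hsplit y, ← Finset.mul_sum]
  -- put the remaining sum in the form of markov_marg
  have ht : i.1 + 1 ≤ n := i.2
  have hL : (∑ y : Fin n → (Y1 × Y2),
      if ((y i).2 = b ∧ (fun j : Fin ↑i => y ⟨j.1, j.2.trans i.2⟩) = u)
        then (∏ j, c j (fun k => y ⟨k.1, k.2.trans j.2⟩) (y j)) else 0)
      = ∑ y : Fin n → (Y1 × Y2),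
        (fun v : Fin (i.1+1) → (Y1 × Y2) =>
          if ((v ⟨i.1, Nat.lt_succ_self _⟩).2 = b
              ∧ (fun k : Fin ↑i => v ⟨k.1, Nat.lt_succ_of_lt k.2⟩) = u) then (1:ℝ) else 0)
          (fun k => y ⟨k.1, lt_of_lt_of_le k.2 ht⟩)
        * ∏ j, c j (fun k => y ⟨k.1, k.2.trans j.2⟩) (y j) :=
    Finset.sum_congr rfl fun y _ => (boole_mul _ _).symm
  rw [hL, markov_marg (i.1 + 1) n ht c hcrow
    (fun v : Fin (i.1+1) → (Y1 × Y2) =>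
      if ((v ⟨i.1, Nat.lt_succ_self _⟩).2 = b
          ∧ (fun k : Fin ↑i => v ⟨k.1, Nat.lt_succ_of_lt k.2⟩) = u) then (1:ℝ) else 0)]
  -- now collapse the (i+1)-step prefix sum via snoc
  rw [← Equiv.sum_comp (Fin.snocEquiv (fun _ => (Y1 × Y2))), Fintype.sum_prod_type]
  have hinner : ∀ a : (Y1 × Y2), ∀ v : Fin ↑i → (Y1 × Y2),
      ((fun vv : Fin (i.1+1) → (Y1 × Y2) =>
          if ((vv ⟨i.1, Nat.lt_succ_self _⟩).2 = b
              ∧ (fun k : Fin ↑i => vv ⟨k.1, Nat.lt_succ_of_lt k.2⟩) = u) then (1:ℝ) else 0)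
        (Fin.snocEquiv (fun _ => (Y1 × Y2)) (a, v)))
        * ∏ j : Fin (i.1+1), c ⟨j.1, lt_of_lt_of_le j.2 ht⟩
            (fun k => (Fin.snocEquiv (fun _ => (Y1 × Y2)) (a, v)) ⟨k.1, k.2.trans j.2⟩)
            ((Fin.snocEquiv (fun _ => (Y1 × Y2)) (a, v)) j)
      = (if (a.2 = b ∧ v = u) then (1:ℝ) else 0) *
        ((∏ j : Fin ↑i, c ⟨j.1, j.2.trans i.2⟩ (fun k => v ⟨k.1, k.2.trans j.2⟩) (v j))
          * c i (fun k => v k) a) := by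
    intro a v
    have h1 : (Fin.snoc (α := fun _ => (Y1 × Y2)) v a) (⟨i.1, Nat.lt_succ_self _⟩ : Fin (i.1+1)) = a :=
      Fin.snoc_last (α := fun _ => (Y1 × Y2)) (p := v) (x := a)
    have h2 : (fun k : Fin ↑i => (Fin.snoc (α := fun _ => (Y1 × Y2)) v a)
        (⟨k.1, Nat.lt_succ_of_lt k.2⟩ : Fin (i.1+1))) = v := by
      funext k
      exact Fin.snoc_castSucc (α := fun _ => (Y1 × Y2)) (p := v) (x := a) (i := k)
    congr 1
    · exact if_congr (by rw [show ((Fin.snocEquiv (fun _ => (Y1 × Y2)) (a, v))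
          (⟨i.1, Nat.lt_succ_self _⟩ : Fin (i.1+1))) = a from h1,
          show (fun k : Fin ↑i => (Fin.snocEquiv (fun _ => (Y1 × Y2)) (a, v))
            (⟨k.1, Nat.lt_succ_of_lt k.2⟩ : Fin (i.1+1))) = v from h2]) rfl rfl
    · rw [Fin.prod_univ_castSucc]
      congr 1
      · refine Finset.prod_congr rfl fun j _ => ?_
        have h3 : (fun k : Fin ↑(j.castSucc) => (Fin.snoc (α := fun _ => (Y1 × Y2)) v a)
            (⟨k.1, k.2.trans (j.castSucc).2⟩ : Fin (i.1+1)))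
            = fun k : Fin ↑j => v ⟨k.1, k.2.trans j.2⟩ := by
          funext k
          exact Fin.snoc_castSucc (α := fun _ => (Y1 × Y2)) (p := v) (x := a)
            (i := ⟨k.1, k.2.trans j.2⟩)
        calc c ⟨(j.castSucc).1, lt_of_lt_of_le (j.castSucc).2 ht⟩
              (fun k => (Fin.snocEquiv (fun _ => (Y1 × Y2)) (a, v)) ⟨k.1, k.2.trans (j.castSucc).2⟩)
              ((Fin.snocEquiv (fun _ => (Y1 × Y2)) (a, v)) (j.castSucc))
            = c ⟨j.1, j.2.trans i.2⟩ (fun k => v ⟨k.1, k.2.trans j.2⟩)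
              ((Fin.snoc (α := fun _ => (Y1 × Y2)) v a) (j.castSucc)) := by
              exact congrFun (congrArg _ h3) _
          _ = c ⟨j.1, j.2.trans i.2⟩ (fun k => v ⟨k.1, k.2.trans j.2⟩) (v j) := by
              rw [Fin.snoc_castSucc]
      · have h4 : (fun k : Fin ↑(Fin.last i.1) => (Fin.snoc (α := fun _ => (Y1 × Y2)) v a)
            (⟨k.1, k.2.trans (Fin.last i.1).2⟩ : Fin (i.1+1)))
            = fun k : Fin ↑i => v k := by
          funext k
          exact Fin.snoc_castSucc (α := fun _ => (Y1 × Y2)) (p := v) (x := a) (i := k)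
        calc c ⟨(Fin.last i.1).1, lt_of_lt_of_le (Fin.last i.1).2 ht⟩
              (fun k => (Fin.snocEquiv (fun _ => (Y1 × Y2)) (a, v)) ⟨k.1, k.2.trans (Fin.last i.1).2⟩)
              ((Fin.snocEquiv (fun _ => (Y1 × Y2)) (a, v)) (Fin.last i.1)) =
            c i (fun k => v k) ((Fin.snoc (α := fun _ => (Y1 × Y2)) v a) (Fin.last i.1)) := by
              exact congrFun (congrArg _ h4) _
          _ = c i (fun k => v k) a := by rw [Fin.snoc_last]
    done
  rw [Finset.sum_congr rfl fun a _ =>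
    Finset.sum_congr rfl fun v _ => hinner a v]
  -- collapse v = u, then sum over a
  have hstep2 : ∀ a : (Y1 × Y2),
      (∑ v : Fin ↑i → (Y1 × Y2), (if (a.2 = b ∧ v = u) then (1:ℝ) else 0) *
        ((∏ j : Fin ↑i, c ⟨j.1, j.2.trans i.2⟩ (fun k => v ⟨k.1, k.2.trans j.2⟩) (v j))
          * c i (fun k => v k) a))
      = if a.2 = b then
          ((∏ j : Fin ↑i, c ⟨j.1, j.2.trans i.2⟩ (fun k => u ⟨k.1, k.2.trans j.2⟩) (u j))
            * c i (fun k => u k) a) else 0 := by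
    intro a
    rw [show (∑ v : Fin ↑i → (Y1 × Y2), (if (a.2 = b ∧ v = u) then (1:ℝ) else 0) *
        ((∏ j : Fin ↑i, c ⟨j.1, j.2.trans i.2⟩ (fun k => v ⟨k.1, k.2.trans j.2⟩) (v j))
          * c i (fun k => v k) a))
      = ∑ v : Fin ↑i → (Y1 × Y2), if a.2 = b then (if v = u then
          ((∏ j : Fin ↑i, c ⟨j.1, j.2.trans i.2⟩ (fun k => v ⟨k.1, k.2.trans j.2⟩) (v j))
            * c i (fun k => v k) a) else 0) else 0 from
      Finset.sum_congr rfl fun v _ => by rw [boole_mul, ite_and]]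
    rw [← ite_sum_swap]
    refine if_congr Iff.rfl ?_ rfl
    exact Finset.sum_ite_eq' Finset.univ u _  |>.trans (by simp)
  rw [Finset.sum_congr rfl fun a _ => hstep2 a]
  -- finish: identify with Qw * K2
  unfold Qw K2
  rw [show (∑ a : (Y1 × Y2), if a.2 = b then
      ((∏ j : Fin ↑i, c ⟨j.1, j.2.trans i.2⟩ (fun k => u ⟨k.1, k.2.trans j.2⟩) (u j))
        * c i (fun k => u k) a) else 0)
    = (∏ j : Fin ↑i, c ⟨j.1, j.2.trans i.2⟩ (fun k => u ⟨k.1, k.2.trans j.2⟩) (u j))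
      * ∑ a : (Y1 × Y2), (if a.2 = b then c i (fun k => u k) a else 0) from by
    rw [Finset.mul_sum]
    exact Finset.sum_congr rfl fun a _ => by rw [mul_ite, mul_zero]]
  rw [mul_assoc]
  rfl

end Chan

section Half
variable {S1 S2 X1 X2 Y1 Y2 : Type}
    [Fintype S1] [Fintype S2] [Fintype X1] [Fintype X2] [Fintype Y1] [Fintype Y2]

lemma half1 (pS : S1 × S2 → ℝ) (hpS : IsPmf pS)
    (chan : X1 → X2 → Y1 × Y2 → ℝ) (hchan : ∀ x1 x2, IsPmf (chan x1 x2))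
    (m n : ℕ)
    (f1 : ∀ i : Fin n, (Fin m → S1) → (Fin i → Y1) → X1)
    (f2 : ∀ i : Fin n, (Fin m → S2) → (Fin i → Y2) → X2) :
    condEnt (twMeasureAdaptive pS chan m n f1 f2)
        (fun ω => fun i => (ω.1 i).1) (fun ω => fun i => (ω.1 i).2) ≤
      (∑ i : Fin n, condMutInf (twMeasureAdaptive pS chan m n f1 f2)
        (fun ω => twInput f1 (fun k => (ω.1 k).1) (fun j => (ω.2 j).1) i)
        (fun ω => (ω.2 i).2)
        (fun ω => twInput f2 (fun k => (ω.1 k).2) (fun j => (ω.2 j).2) i)) +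
      condEnt (twMeasureAdaptive pS chan m n f1 f2)
        (fun ω => fun i => (ω.1 i).1)
        (fun ω => ((fun i => (ω.1 i).2), (fun j => (ω.2 j).2))) := by
  set μ := twMeasureAdaptive pS chan m n f1 f2 with hμd
  have hμ : ∀ ω, 0 ≤ μ ω := twM_nonneg pS chan hpS hchan m f1 f2
  set A : (Fin m → S1 × S2) × (Fin n → Y1 × Y2) → (Fin m → S1) :=
    fun ω => fun i => (ω.1 i).1 with hA
  set B : (Fin m → S1 × S2) × (Fin n → Y1 × Y2) → (Fin m → S2) :=
    fun ω => fun i => (ω.1 i).2 with hB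
  set G : ℕ → ℝ := fun t => condEnt μ A (fun ω => (B ω, fun j : Fin (min t n) =>
      (ω.2 ⟨j.1, lt_of_lt_of_le j.2 (min_le_right t n)⟩).2)) with hGdef
  have hG0 : G 0 = condEnt μ A B := by
    have hinj : Function.Injective (fun b : Fin m → S2 =>
        (b, fun j : Fin (min 0 n) => (Fin.elim0 (Fin.cast (show min 0 n = 0 by simp) j) : Y2))) :=
      fun a b h => congrArg Prod.fst h
    have hrw : (fun ω : (Fin m → S1 × S2) × (Fin n → Y1 × Y2) =>
        (B ω, fun j : Fin (min 0 n) =>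
          (ω.2 ⟨j.1, lt_of_lt_of_le j.2 (min_le_right 0 n)⟩).2))
        = fun ω => ((fun b : Fin m → S2 =>
          (b, fun j : Fin (min 0 n) =>
            (Fin.elim0 (Fin.cast (show min 0 n = 0 by simp) j) : Y2))) (B ω)) := by
      funext ω
      refine congrArg (Prod.mk (B ω)) ?_
      funext j
      exact (Nat.not_lt_zero j.1 (by simpa using j.2)).elim
    have h2 : condEnt μ A (fun ω => (B ω, fun j : Fin (min 0 n) =>
        (ω.2 ⟨j.1, lt_of_lt_of_le j.2 (min_le_right 0 n)⟩).2)) = condEnt μ A B := by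
      rw [hrw]
      exact condEnt_comp_right μ A _ hinj B
    exact h2
  have hGn : G n = condEnt μ A (fun ω => (B ω, fun j : Fin n => (ω.2 j).2)) := by
    have hinj : Function.Injective (fun p : (Fin m → S2) × (Fin n → Y2) =>
        (p.1, fun j : Fin (min n n) => p.2 ⟨j.1, lt_of_lt_of_le j.2 (min_le_right n n)⟩)) := by
      intro p q h
      have h1 := congrArg Prod.fst h
      have h2 := congrArg Prod.snd h
      simp only at h1 h2
      refine Prod.ext h1 ?_
      funext k
      exact congrFun h2 ⟨k.1, lt_min k.2 k.2⟩
    exact condEnt_comp_right μ A _ hinj (fun ω => (B ω, fun j : Fin n => (ω.2 j).2))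
  have hbound : ∀ i : Fin n, G ↑i - G (i.1 + 1) ≤ condMutInf μ
      (fun ω => twInput f1 (fun k => (ω.1 k).1) (fun j => (ω.2 j).1) i)
      (fun ω => (ω.2 i).2)
      (fun ω => twInput f2 (fun k => (ω.1 k).2) (fun j => (ω.2 j).2) i) := by
    intro i
    set T : (Fin m → S1 × S2) × (Fin n → Y1 × Y2) → Y2 := fun ω => (ω.2 i).2 with hT
    set U : (Fin m → S1 × S2) × (Fin n → Y1 × Y2) → (Fin m → S2) × (Fin ↑i → Y2) :=
      fun ω => (B ω, fun j : Fin ↑i => (ω.2 ⟨j.1, j.2.trans i.2⟩).2) with hU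
    set Wp : (Fin m → S1 × S2) × (Fin n → Y1 × Y2) →
        (Fin m → S1 × S2) × (Fin ↑i → Y1 × Y2) :=
      fun ω => (ω.1, fun j : Fin ↑i => ω.2 ⟨j.1, j.2.trans i.2⟩) with hWp
    set X1i : (Fin m → S1 × S2) × (Fin n → Y1 × Y2) → X1 :=
      fun ω => twInput f1 (fun k => (ω.1 k).1) (fun j => (ω.2 j).1) i with hX1i
    set X2i : (Fin m → S1 × S2) × (Fin n → Y1 × Y2) → X2 :=
      fun ω => twInput f2 (fun k => (ω.1 k).2) (fun j => (ω.2 j).2) i with hX2i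
    -- (a) identify G ↑i
    have eGi : G ↑i = condEnt μ A U := by
      have hinj : Function.Injective (fun p : (Fin m → S2) × (Fin ↑i → Y2) =>
          (p.1, fun j : Fin (min ↑i n) => p.2 ⟨j.1, lt_of_le_of_lt' (min_le_left ↑i n) j.2⟩)) := by
        intro p q h
        have h1 := congrArg Prod.fst h
        have h2 := congrArg Prod.snd h
        simp only at h1 h2
        refine Prod.ext h1 ?_
        funext k
        exact congrFun h2 ⟨k.1, lt_min k.2 (k.2.trans i.2)⟩
      exact condEnt_comp_right μ A _ hinj U
    -- (b) identify G (↑i + 1)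
    have eGs : G (i.1 + 1) = condEnt μ A (fun ω => (T ω, U ω)) := by
      have hlt : i.1 < min (i.1 + 1) n := lt_min (Nat.lt_succ_self _) i.2
      have hinj : Function.Injective
          (fun p : (Fin m → S2) × (Fin (min (i.1 + 1) n) → Y2) =>
            ((p.2 ⟨i.1, hlt⟩ : Y2),
              (p.1, fun k : Fin ↑i =>
                p.2 ⟨k.1, lt_min (Nat.lt_succ_of_lt k.2) (k.2.trans i.2)⟩))) := by
        intro p q h
        have h1 := congrArg Prod.fst h
        have h2 := congrArg (fun r : Y2 × ((Fin m → S2) × (Fin ↑i → Y2)) => r.2.1) h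
        have h3 := congrArg (fun r : Y2 × ((Fin m → S2) × (Fin ↑i → Y2)) => r.2.2) h
        simp only at h1 h2 h3
        refine Prod.ext h2 ?_
        funext j
        have hj1 : j.1 < i.1 + 1 := lt_of_lt_of_le j.2 (min_le_left _ _)
        rcases Nat.lt_or_ge j.1 i.1 with hj | hj
        · exact congrFun h3 ⟨j.1, hj⟩
        · have hje : j = ⟨i.1, hlt⟩ := Fin.ext (le_antisymm (Nat.lt_succ_iff.mp hj1) hj)
          rw [hje]; exact h1
      exact (condEnt_comp_right μ A _ hinj
        (fun ω => (B ω, fun j : Fin (min (i.1 + 1) n) =>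
          (ω.2 ⟨j.1, lt_of_lt_of_le j.2 (min_le_right (i.1 + 1) n)⟩).2))).symm
    -- (f) conditioning coarsened to X2i
    have hf : condEnt μ T U ≤ condEnt μ T X2i :=
      condEnt_le_of_comp μ hμ T U X2i
        (fun p : (Fin m → S2) × (Fin ↑i → Y2) => f2 i p.1 p.2) (fun ω => rfl)
    -- (g) conditioning refined to full past Wp
    have hg : condEnt μ T Wp ≤ condEnt μ T (fun ω => (A ω, U ω)) :=
      condEnt_le_of_comp μ hμ T Wp (fun ω => (A ω, U ω))
        (fun p : (Fin m → S1 × S2) × (Fin ↑i → Y1 × Y2) =>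
          ((fun k => (p.1 k).1), ((fun k => (p.1 k).2), (fun j => (p.2 j).2))))
        (fun ω => rfl)
    -- (h) Markov step
    have hfact : ∀ (b : Y2) (sv : (Fin m → S1 × S2) × (Fin ↑i → Y1 × Y2)),
        prD μ (fun ω => (T ω, Wp ω)) (b, sv)
          = prD μ Wp sv * K2 chan (gIn f1 f2 i sv) b := by
      intro b sv
      have hs := struct_fact pS chan f1 f2 hpS hchan i b sv
      have hQ : prD μ Wp sv = Qw pS chan f1 f2 i sv := by
        rw [← prD_pair_marg μ T Wp sv]
        rw [show (∑ b' : Y2, prD μ (fun ω => (T ω, Wp ω)) (b', sv))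
            = ∑ b' : Y2, Qw pS chan f1 f2 i sv * K2 chan (gIn f1 f2 i sv) b' from
          Finset.sum_congr rfl fun b' _ => struct_fact pS chan f1 f2 hpS hchan i b' sv]
        rw [← Finset.mul_sum, K2_rows chan hchan, mul_one]
      rw [hQ]
      exact hs
    have hmk : condEnt μ T Wp = condEnt μ T (fun ω => (X1i ω, X2i ω)) :=
      condEnt_markov μ T Wp (gIn f1 f2 i) (K2 chan) (K2_rows chan hchan) hfact
    -- combine
    have c1 : G ↑i - G (i.1 + 1) = condMutInf μ A T U := by
      rw [eGi, eGs]; rfl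
    have c2 : condMutInf μ A T U = condMutInf μ T A U := condMutInf_comm μ A T U
    have c3 : condMutInf μ T A U
        = condEnt μ T U - condEnt μ T (fun ω => (A ω, U ω)) := rfl
    have c4 : condMutInf μ X1i T X2i = condMutInf μ T X1i X2i :=
      condMutInf_comm μ X1i T X2i
    have c5 : condMutInf μ T X1i X2i
        = condEnt μ T X2i - condEnt μ T (fun ω => (X1i ω, X2i ω)) := rfl
    calc G ↑i - G (↑i + 1)
        = condEnt μ T U - condEnt μ T (fun ω => (A ω, U ω)) := by rw [c1, c2, c3]
      _ ≤ condEnt μ T X2i - condEnt μ T (fun ω => (X1i ω, X2i ω)) := by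
          rw [← hmk]; exact sub_le_sub hf hg
      _ = condMutInf μ X1i T X2i := by rw [c4, c5]
  -- telescoping
  have htel : (∑ i : Fin n, (G ↑i - G (↑i + 1))) = G 0 - G n := by
    rw [Fin.sum_univ_eq_sum_range (fun k => G k - G (k + 1)) n]
    exact Finset.sum_range_sub' G n
  calc condEnt μ A B = (∑ i : Fin n, (G ↑i - G (↑i + 1)))
        + condEnt μ A (fun ω => (B ω, fun j : Fin n => (ω.2 j).2)) := by
        rw [htel, hG0, hGn]; ring
    _ ≤ (∑ i : Fin n, condMutInf μ
          (fun ω => twInput f1 (fun k => (ω.1 k).1) (fun j => (ω.2 j).1) i)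
          (fun ω => (ω.2 i).2)
          (fun ω => twInput f2 (fun k => (ω.1 k).2) (fun j => (ω.2 j).2) i))
        + condEnt μ A (fun ω => (B ω, fun j : Fin n => (ω.2 j).2)) :=
        add_le_add_left (Finset.sum_le_sum fun i _ => hbound i) _

end Half

section Transport
variable {Ω Ω' α β γ : Type} [Fintype Ω] [Fintype Ω'] (e : Ω' ≃ Ω) (μ : Ω → ℝ)

lemma prD_comp_equiv (X : Ω → α) (a : α) :
    prD (fun ω' => μ (e ω')) (fun ω' => X (e ω')) a = prD μ X a :=
  Equiv.sum_comp e (fun ω => if X ω = a then μ ω else 0)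

lemma ent_comp_equiv [Fintype α] (X : Ω → α) :
    ent (fun ω' => μ (e ω')) (fun ω' => X (e ω')) = ent μ X := by
  unfold ent
  congr 1
  exact Finset.sum_congr rfl fun a _ => by rw [prD_comp_equiv]

lemma condEnt_comp_equiv [Fintype α] [Fintype β] (X : Ω → α) (Y : Ω → β) :
    condEnt (fun ω' => μ (e ω')) (fun ω' => X (e ω')) (fun ω' => Y (e ω'))
      = condEnt μ X Y := by
  unfold condEnt
  rw [ent_comp_equiv e μ Y]
  congr 1
  exact ent_comp_equiv e μ (fun ω => (X ω, Y ω))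

lemma condMutInf_comp_equiv [Fintype α] [Fintype β] [Fintype γ]
    (X : Ω → α) (Y : Ω → β) (Z : Ω → γ) :
    condMutInf (fun ω' => μ (e ω')) (fun ω' => X (e ω')) (fun ω' => Y (e ω'))
        (fun ω' => Z (e ω'))
      = condMutInf μ X Y Z := by
  unfold condMutInf
  rw [condEnt_comp_equiv e μ X Z]
  congr 1
  exact condEnt_comp_equiv e μ X (fun ω => (Y ω, Z ω))

end Transport

def swapEquiv {S1 S2 Y1 Y2 : Type} (m n : ℕ) :
    ((Fin m → S2 × S1) × (Fin n → Y2 × Y1)) ≃ ((Fin m → S1 × S2) × (Fin n → Y1 × Y2)) where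
  toFun ω := (fun k => ((ω.1 k).2, (ω.1 k).1), fun j => ((ω.2 j).2, (ω.2 j).1))
  invFun ω := (fun k => ((ω.1 k).2, (ω.1 k).1), fun j => ((ω.2 j).2, (ω.2 j).1))
  left_inv ω := by refine Prod.ext (funext fun k => ?_) (funext fun j => ?_) <;> simp
  right_inv ω := by refine Prod.ext (funext fun k => ?_) (funext fun j => ?_) <;> simp

/-- For a DM two-way channel with arbitrary adaptive encoders
`X_{1,i} = f_{1,i}(S1^m, Y1^{i-1})`, `X_{2,i} = f_{2,i}(S2^m, Y2^{i-1})`: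
`H(S1^m|S2^m) ≤ Σ_i I(X_{1,i}; Y_{2,i} | X_{2,i}) + H(S1^m|S2^m, Y2^n)` and
`H(S2^m|S1^m) ≤ Σ_i I(X_{2,i}; Y_{1,i} | X_{1,i}) + H(S2^m|S1^m, Y1^n)`. -/
theorem two_way_core_inequality
    {S1 S2 X1 X2 Y1 Y2 : Type}
    [Fintype S1] [Fintype S2] [Fintype X1] [Fintype X2] [Fintype Y1] [Fintype Y2]
    (pS : S1 × S2 → ℝ) (hpS : IsPmf pS)
    (chan : X1 → X2 → Y1 × Y2 → ℝ) (hchan : ∀ x1 x2, IsPmf (chan x1 x2))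
    (m n : ℕ)
    (f1 : ∀ i : Fin n, (Fin m → S1) → (Fin i → Y1) → X1)
    (f2 : ∀ i : Fin n, (Fin m → S2) → (Fin i → Y2) → X2) :
    (condEnt (twMeasureAdaptive pS chan m n f1 f2)
        (fun ω => fun i => (ω.1 i).1) (fun ω => fun i => (ω.1 i).2) ≤
      (∑ i : Fin n, condMutInf (twMeasureAdaptive pS chan m n f1 f2)
        (fun ω => twInput f1 (fun k => (ω.1 k).1) (fun j => (ω.2 j).1) i)
        (fun ω => (ω.2 i).2)
        (fun ω => twInput f2 (fun k => (ω.1 k).2) (fun j => (ω.2 j).2) i)) +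
      condEnt (twMeasureAdaptive pS chan m n f1 f2)
        (fun ω => fun i => (ω.1 i).1)
        (fun ω => ((fun i => (ω.1 i).2), (fun j => (ω.2 j).2)))) ∧
    (condEnt (twMeasureAdaptive pS chan m n f1 f2)
        (fun ω => fun i => (ω.1 i).2) (fun ω => fun i => (ω.1 i).1) ≤
      (∑ i : Fin n, condMutInf (twMeasureAdaptive pS chan m n f1 f2)
        (fun ω => twInput f2 (fun k => (ω.1 k).2) (fun j => (ω.2 j).2) i)
        (fun ω => (ω.2 i).1)
        (fun ω => twInput f1 (fun k => (ω.1 k).1) (fun j => (ω.2 j).1) i)) +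
      condEnt (twMeasureAdaptive pS chan m n f1 f2)
        (fun ω => fun i => (ω.1 i).2)
        (fun ω => ((fun i => (ω.1 i).1), (fun j => (ω.2 j).1)))) := by
  constructor
  · exact half1 pS hpS chan hchan m n f1 f2
  · -- apply half1 to the role-swapped system and transport along swapEquiv
    set μ := twMeasureAdaptive pS chan m n f1 f2 with hμd
    set pS' : S2 × S1 → ℝ := fun p => pS (p.2, p.1) with hpS'd
    set chan' : X2 → X1 → Y2 × Y1 → ℝ := fun x2 x1 p => chan x1 x2 (p.2, p.1) with hchan'd
    have hpS' : IsPmf pS' := by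
      constructor
      · intro a; exact hpS.1 _
      · rw [show (∑ a : S2 × S1, pS' a) = ∑ a : S1 × S2, pS a from
          Equiv.sum_comp (Equiv.prodComm S2 S1) pS]
        exact hpS.2
    have hchan' : ∀ x2 x1, IsPmf (chan' x2 x1) := by
      intro x2 x1
      constructor
      · intro a; exact (hchan x1 x2).1 _
      · rw [show (∑ a : Y2 × Y1, chan' x2 x1 a) = ∑ a : Y1 × Y2, chan x1 x2 a from
          Equiv.sum_comp (Equiv.prodComm Y2 Y1) (chan x1 x2)]
        exact (hchan x1 x2).2
    have h := half1 pS' hpS' chan' hchan' m n f2 f1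
    set e := swapEquiv (S1 := S1) (S2 := S2) (Y1 := Y1) (Y2 := Y2) m n with hed
    have hμ'e : twMeasureAdaptive pS' chan' m n f2 f1 = fun ω' => μ (e ω') := rfl
    rw [hμ'e] at h
    have t1 : condEnt (fun ω' => μ (e ω'))
        (fun ω' => fun i => (ω'.1 i).1) (fun ω' => fun i => (ω'.1 i).2)
        = condEnt μ (fun ω => fun i => (ω.1 i).2) (fun ω => fun i => (ω.1 i).1) :=
      condEnt_comp_equiv e μ (fun ω => fun i => (ω.1 i).2) (fun ω => fun i => (ω.1 i).1)
    have t2 : ∀ i : Fin n, condMutInf (fun ω' => μ (e ω'))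
        (fun ω' => twInput f2 (fun k => (ω'.1 k).1) (fun j => (ω'.2 j).1) i)
        (fun ω' => (ω'.2 i).2)
        (fun ω' => twInput f1 (fun k => (ω'.1 k).2) (fun j => (ω'.2 j).2) i)
        = condMutInf μ
          (fun ω => twInput f2 (fun k => (ω.1 k).2) (fun j => (ω.2 j).2) i)
          (fun ω => (ω.2 i).1)
          (fun ω => twInput f1 (fun k => (ω.1 k).1) (fun j => (ω.2 j).1) i) :=
      fun i => condMutInf_comp_equiv e μ
        (fun ω => twInput f2 (fun k => (ω.1 k).2) (fun j => (ω.2 j).2) i)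
        (fun ω => (ω.2 i).1)
        (fun ω => twInput f1 (fun k => (ω.1 k).1) (fun j => (ω.2 j).1) i)
    have t3 : condEnt (fun ω' => μ (e ω'))
        (fun ω' => fun i => (ω'.1 i).1)
        (fun ω' => ((fun i => (ω'.1 i).2), (fun j => (ω'.2 j).2)))
        = condEnt μ (fun ω => fun i => (ω.1 i).2)
          (fun ω => ((fun i => (ω.1 i).1), (fun j => (ω.2 j).1))) :=
      condEnt_comp_equiv e μ (fun ω => fun i => (ω.1 i).2)
        (fun ω => ((fun i => (ω.1 i).1), (fun j => (ω.2 j).1)))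
    rw [t1, t3, Finset.sum_congr rfl fun i _ => t2 i] at h
    exact h
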